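/- Let X_1,...,X_K be formal power series over ℚ in noncommuting variables, and suppose that for each i and each word v of length j ≤ n the denominator of the coefficient of v in X_i divides δ_j(X_i). Then for any word w of length n, the denominator of the coefficient of w in the product X_1···X_K divides lcm{ δ_{j_1}(X_1)···δ_{j_K}(X_K) : j_i ≥ 0, j_1+...+j_K = n }. -/

import Mathlib

lemma den_mul_natCast_eq_one_iff (q : ℚ) (m : ℕ) (hm : m ≠ 0) :
    (q * (m : ℚ)).den = 1 ↔ q.den ∣ m := by
  have h1 : q * (m : ℚ) = ((q.num * m : ℤ) : ℚ) / ((q.den : ℤ) : ℚ) := by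
    push_cast
    rw [eq_div_iff (by exact_mod_cast q.den_nz)]
    rw [mul_right_comm, Rat.mul_den_eq_num]
  rw [h1, Rat.den_div_intCast_eq_one_iff _ _ (by exact_mod_cast q.den_nz)]
  rw [Int.natCast_dvd]
  rw [Int.natAbs_mul, Int.natAbs_natCast]
  constructor
  · intro h
    exact (Nat.Coprime.dvd_of_dvd_mul_left q.reduced.symm h)
  · intro h
    exact Dvd.dvd.mul_left h _

lemma den_add_dvd_lcm (a b : ℚ) : (a + b).den ∣ Nat.lcm a.den b.den := by
  set L := Nat.lcm a.den b.den with hLdef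
  have hL : L ≠ 0 := Nat.lcm_ne_zero a.den_nz b.den_nz
  rw [← den_mul_natCast_eq_one_iff _ _ hL]
  have h1 : (a * (L : ℚ)).den = 1 :=
    (den_mul_natCast_eq_one_iff _ _ hL).mpr (Nat.dvd_lcm_left _ _)
  have h2 : (b * (L : ℚ)).den = 1 :=
    (den_mul_natCast_eq_one_iff _ _ hL).mpr (Nat.dvd_lcm_right _ _)
  have h3 : (a + b) * (L : ℚ) = a * L + b * L := add_mul a b L
  rw [h3]
  have := Rat.add_den_dvd (a * (L : ℚ)) (b * (L : ℚ))
  rw [h1, h2] at this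
  simpa using this

lemma den_sum_dvd_lcm {ι : Type*} (S : Finset ι) (f : ι → ℚ) :
    (∑ i ∈ S, f i).den ∣ S.lcm fun i => (f i).den := by
  classical
  induction S using Finset.induction_on with
  | empty => simp
  | insert a s ha ih =>
    rw [Finset.sum_insert ha, Finset.lcm_insert]
    refine (den_add_dvd_lcm _ _).trans ?_
    exact lcm_dvd_lcm dvd_rfl ih

lemma mul_finset_lcm {ι : Type*} (a : ℕ) (S : Finset ι) (hS : S.Nonempty) (g : ι → ℕ) :
    a * S.lcm g = S.lcm fun j => a * g j := by
  classical
  induction hS using Finset.Nonempty.cons_induction with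
  | singleton j => simp [normalize_eq]
  | cons j S hj hS ih =>
    rw [Finset.cons_eq_insert, Finset.lcm_insert, Finset.lcm_insert, ← ih, lcm_mul_left]
    simp [normalize_eq]

/-- A formal power series in noncommuting variables from the alphabet `A` is represented by
its coefficient function `List A → ℚ` (a word is a `List A`).  `prodCoeff [X₁,…,X_K] w` is the
coefficient of the word `w` in the product `X₁ ⋯ X_K`: the sum over all factorizations
`w = v⁽¹⁾ ⋯ v⁽ᴷ⁾` of the products of the coefficients. -/
def prodCoeff {A : Type*} : List (List A → ℚ) → List A → ℚ
  | [], [] => 1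
  | [], _ :: _ => 0
  | X :: Xs, w => ∑ i ∈ Finset.range (w.length + 1),
      X (List.take i w) * prodCoeff Xs (List.drop i w)

lemma key {A : Type*} : ∀ (K n : ℕ) (X : Fin K → (List A → ℚ)) (δ : Fin K → ℕ → ℕ),
    (∀ i : Fin K, ∀ v : List A, v.length ≤ n → (X i v).den ∣ δ i v.length) →
    ∀ w : List A, w.length = n →
    (prodCoeff (List.ofFn X) w).den ∣
      (Finset.Nat.antidiagonalTuple K n).lcm fun j => ∏ i, δ i (j i) := by
  intro K
  induction K with
  | zero =>
    intro n X δ hδ w hw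
    have h1 : (prodCoeff (List.ofFn X) w).den = 1 := by
      cases w <;> simp [List.ofFn_zero, prodCoeff]
    rw [h1]
    exact one_dvd _
  | succ K ih =>
    intro n X δ hδ w hw
    rw [List.ofFn_succ]
    have hrw : prodCoeff (X 0 :: List.ofFn fun i => X i.succ) w =
        ∑ i ∈ Finset.range (w.length + 1),
          X 0 (List.take i w) * prodCoeff (List.ofFn fun i => X i.succ) (List.drop i w) := by
      rw [prodCoeff]
    rw [hrw]
    refine (den_sum_dvd_lcm _ _).trans (Finset.lcm_dvd ?_)
    intro i hi
    rw [Finset.mem_range, Nat.lt_succ_iff, hw] at hi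
    have htake : (List.take i w).length = i := by simp [hw, hi]
    have hdrop : (List.drop i w).length = n - i := by simp [hw]
    by_cases hne : (Finset.Nat.antidiagonalTuple K (n - i)).Nonempty
    · have h1 : (X 0 (List.take i w)).den ∣ δ 0 i := by
        have := hδ 0 (List.take i w) (by rw [htake]; exact hi)
        rwa [htake] at this
      have h2 : (prodCoeff (List.ofFn fun i' => X i'.succ) (List.drop i w)).den ∣
          (Finset.Nat.antidiagonalTuple K (n - i)).lcm fun j => ∏ i', δ i'.succ (j i') :=
        ih (n - i) (fun i' => X i'.succ) (fun i' => δ i'.succ)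
          (fun i' v hv => hδ i'.succ v (hv.trans (Nat.sub_le _ _))) _ hdrop
      refine ((Rat.mul_den_dvd _ _).trans (mul_dvd_mul h1 h2)).trans ?_
      rw [mul_finset_lcm _ _ hne]
      refine Finset.lcm_dvd ?_
      intro j hj
      rw [Finset.Nat.mem_antidiagonalTuple] at hj
      have hmem : Fin.cons i j ∈ Finset.Nat.antidiagonalTuple (K + 1) n := by
        rw [Finset.Nat.mem_antidiagonalTuple, Fin.sum_cons, hj]
        exact Nat.add_sub_cancel' hi
      refine dvd_trans ?_ (Finset.dvd_lcm hmem (f := fun j => ∏ i', δ i' (j i')))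
      rw [Fin.prod_univ_succ]
      simp
    · have hK : K = 0 := by
        by_contra hK
        obtain ⟨K', rfl⟩ := Nat.exists_eq_succ_of_ne_zero hK
        exact hne ⟨Fin.cons (n - i) 0, by
          rw [Finset.Nat.mem_antidiagonalTuple]; simp [Fin.sum_cons]⟩
      subst hK
      have hni : n - i ≠ 0 := by
        intro h
        exact hne ⟨![], by rw [Finset.Nat.mem_antidiagonalTuple]; simp [h]⟩
      have h0 : prodCoeff (List.ofFn fun i' : Fin 0 => X i'.succ) (List.drop i w) = 0 := by
        rw [List.ofFn_zero]
        cases hD : List.drop i w with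
        | nil => exact absurd (by rw [← hdrop, hD]; rfl) hni
        | cons a l => rfl
      rw [h0, mul_zero]
      simp

theorem den_coeff_prod_dvd (A : Type*) (K n : ℕ)
    (X : Fin K → (List A → ℚ)) (δ : Fin K → ℕ → ℕ)
    (hδ : ∀ i : Fin K, ∀ v : List A, v.length ≤ n → (X i v).den ∣ δ i v.length)
    (w : List A) (hw : w.length = n) :
    (prodCoeff (List.ofFn X) w).den ∣
      (Finset.Nat.antidiagonalTuple K n).lcm fun j => ∏ i, δ i (j i) := by
  exact key K n X δ hδ w hw
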